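/- arXiv:1505.03132 — 6 statements merged into one kernel-verified Lean document; each statement's English description precedes it below -/
import Mathlib

section
/- Let B be an n×s integer matrix with all columns nonzero, let M = cone(B) ∩ ℤ^n \ {0}, where cone(B) = {Bt : t ∈ ℝ^s, t ≥ 0}, and let c ∈ ℝ^n. If the infimum of c⋅x over x ∈ M is attained, then it is attained at some point of M that lies in the convex hull of the origin together with the columns of B. -/
open Matrix

/-- **Lemma 1.** Let `B` be an `n × s` integer matrix with all columns nonzero,
let `M = cone(B) ∩ ℤ^n \ {0}`, and let `c ∈ ℝ^n`. If the infimum of `c⋅x` over `x ∈ M`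
is attained, then it is attained at some point of `M` lying in the convex hull of the origin
together with the columns of `B`. -/
theorem min_over_cone_lattice_in_conv {n s : ℕ} (B : Matrix (Fin n) (Fin s) ℤ)
    (hcols : ∀ j : Fin s, (fun i => B i j) ≠ (0 : Fin n → ℤ))
    (c : Fin n → ℝ) (M : Set (Fin n → ℝ))
    (hM : M = {x : Fin n → ℝ |
      (∃ t : Fin s → ℝ, (∀ i, 0 ≤ t i) ∧ x = (B.map (Int.cast : ℤ → ℝ)).mulVec t) ∧
      (∃ z : Fin n → ℤ, x = fun i => (z i : ℝ)) ∧ x ≠ 0})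
    (hattained : ∃ x₀ ∈ M, ∀ x ∈ M, ∑ i, c i * x₀ i ≤ ∑ i, c i * x i) :
    ∃ y ∈ M, y ∈ convexHull ℝ ({0} ∪ Set.range fun j : Fin s => fun i => (B i j : ℝ)) ∧
      ∀ x ∈ M, ∑ i, c i * y i ≤ ∑ i, c i * x i := by
  classical
  obtain ⟨x₀, hx₀M, hmin⟩ := hattained
  set m : ℝ := ∑ i, c i * x₀ i with hm
  have hx₀M' := hx₀M
  rw [hM] at hx₀M'
  obtain ⟨⟨t, ht0, hxt⟩, ⟨z, hz⟩, hx0ne⟩ := hx₀M'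
  -- columns are in M
  have hcolM : ∀ j : Fin s, (fun i => (B i j : ℝ)) ∈ M := by
    intro j
    rw [hM]
    refine ⟨⟨Pi.single j 1, ?_, ?_⟩, ⟨fun i => B i j, rfl⟩, ?_⟩
    · intro i
      by_cases h : i = j <;> simp [Pi.single_apply, h]
    · funext i
      simp [Matrix.mulVec, dotProduct, Pi.single_apply, mul_ite, Finset.sum_ite_eq']
    · intro h
      apply hcols j
      funext i
      have := congrFun h i
      simpa using this
  -- m ≥ 0 since 2x₀ ∈ M
  have h2xM : (fun i => (2:ℝ) * x₀ i) ∈ M := by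
    rw [hM]
    refine ⟨⟨fun j => 2 * t j, fun j => by dsimp only; have := ht0 j; linarith, ?_⟩,
      ⟨fun i => 2 * z i, ?_⟩, ?_⟩
    · funext i
      have := congrFun hxt i
      simp only [Matrix.mulVec, dotProduct, Matrix.map_apply] at this ⊢
      rw [this, Finset.mul_sum]
      exact Finset.sum_congr rfl fun j _ => by ring
    · funext i
      have := congrFun hz i
      simp [this]
    · intro h
      apply hx0ne
      funext i
      have := congrFun h i
      simp only [Pi.zero_apply] at this ⊢
      linarith
  have hm0 : 0 ≤ m := by
    have := hmin _ h2xM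
    have h2 : ∑ i, c i * (2 * x₀ i) = 2 * m := by
      rw [hm, Finset.mul_sum]
      exact Finset.sum_congr rfl fun i _ => by ring
    rw [h2] at this
    linarith
  -- d j = c ⋅ (column j) and m ≤ d j
  set d : Fin s → ℝ := fun j => ∑ i, c i * (B i j : ℝ) with hd
  have hmd : ∀ j, m ≤ d j := fun j => hmin _ (hcolM j)
  -- key identity m = ∑ j, t j * d j
  have hkey : m = ∑ j, t j * d j := by
    rw [hm, hd]
    conv_lhs => rw [hxt]
    simp only [Matrix.mulVec, dotProduct, Matrix.map_apply, Finset.mul_sum]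
    rw [Finset.sum_comm]
    exact Finset.sum_congr rfl fun j _ =>
      Finset.sum_congr rfl fun i _ => by ring
  set σ : ℝ := ∑ j, t j with hσ
  by_cases hσ1 : σ ≤ 1
  · -- x₀ itself is in the convex hull
    refine ⟨x₀, hx₀M, ?_, hmin⟩
    have hconv : Convex ℝ (convexHull ℝ
        ({0} ∪ Set.range fun j : Fin s => fun i => (B i j : ℝ))) :=
      convex_convexHull ℝ _
    have hx₀eq : x₀ = ∑ o : Option (Fin s),
        (Option.elim o (1 - σ) t) •
          (Option.elim o (0 : Fin n → ℝ) (fun j => fun i => (B i j : ℝ))) := by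
      funext i
      rw [Fintype.sum_option]
      simp only [Option.elim_none, Option.elim_some, Pi.add_apply, Pi.smul_apply,
        smul_eq_mul, Pi.zero_apply, Finset.sum_apply, mul_zero, zero_add]
      have := congrFun hxt i
      simp only [Matrix.mulVec, dotProduct, Matrix.map_apply] at this
      rw [this]
      exact Finset.sum_congr rfl fun j _ => by ring
    rw [hx₀eq]
    refine hconv.sum_mem ?_ ?_ ?_
    · intro o _
      cases o with
      | none => simp only [Option.elim_none]; linarith
      | some j => exact ht0 j
    · rw [Fintype.sum_option]
      simp only [Option.elim_none, Option.elim_some]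
      rw [← hσ]; ring
    · intro o _
      cases o with
      | none => exact subset_convexHull ℝ _ (Or.inl rfl)
      | some j => exact subset_convexHull ℝ _ (Or.inr ⟨j, rfl⟩)
  · push_neg at hσ1
    -- m = 0
    have hσm : σ * m ≤ m := by
      calc σ * m = ∑ j, t j * m := by rw [hσ, Finset.sum_mul]
      _ ≤ ∑ j, t j * d j :=
          Finset.sum_le_sum fun j _ => mul_le_mul_of_nonneg_left (hmd j) (ht0 j)
      _ = m := hkey.symm
    have hmeq : m = 0 := by nlinarith
    -- all terms t j * d j vanish
    have hterm : ∀ j ∈ Finset.univ, t j * d j = 0 := by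
      rw [← Finset.sum_eq_zero_iff_of_nonneg]
      · rw [← hkey, hmeq]
      · intro j _
        exact mul_nonneg (ht0 j) (hmeq ▸ hmd j)
    have hex : ∃ j, 0 < t j := by
      by_contra h
      push_neg at h
      have : σ ≤ 0 := Finset.sum_nonpos fun j _ => h j
      linarith
    obtain ⟨j, hj⟩ := hex
    have hdj : d j = 0 := by
      have := hterm j (Finset.mem_univ j)
      rcases mul_eq_zero.1 this with h | h
      · exact absurd h (ne_of_gt hj)
      · exact h
    refine ⟨_, hcolM j, subset_convexHull ℝ _ (Or.inr ⟨j, rfl⟩), ?_⟩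
    intro x hx
    have : m ≤ ∑ i, c i * x i := hmin x hx
    have hval : ∑ i, c i * (fun i => (B i j : ℝ)) i = d j := rfl
    rw [hval, hdj, ← hmeq]
    exact this
end

section
/- Let A be an m×n integer matrix of rank n and b ∈ ℤ^m such that P(A,b) = {x ∈ ℝ^n : Ax ≤ b} is a nonempty bounded full-dimensional polytope, and suppose every component b_i of b is divisible by Δ_lcm(A). Then every vertex (extreme point) of P(A,b) is an integer point, i.e. lies in ℤ^n. -/
open Matrix

/-- The polyhedron `P(A,b) = {x ∈ ℝ^n : A x ≤ b}` of an integer matrix `A` and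
integer right-hand side `b`. -/
def poly {m n : ℕ} (A : Matrix (Fin m) (Fin n) ℤ) (b : Fin m → ℤ) : Set (Fin n → ℝ) :=
  {x | ∀ i, ((A.map (Int.cast : ℤ → ℝ)).mulVec x) i ≤ (b i : ℝ)}

/-- The lattice width of a set `P ⊆ ℝ^n`: the minimum (infimum) over nonzero integer
vectors `c` of `sup_{x ∈ P} c⋅x − inf_{x ∈ P} c⋅x`. -/
noncomputable def width {n : ℕ} (P : Set (Fin n → ℝ)) : ℝ :=
  sInf {w : ℝ | ∃ c : Fin n → ℤ, c ≠ 0 ∧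
    w = sSup ((fun x : Fin n → ℝ => ∑ i, (c i : ℝ) * x i) '' P)
        - sInf ((fun x : Fin n → ℝ => ∑ i, (c i : ℝ) * x i) '' P)}

/-- `Δ(A)`: the maximum absolute value of the determinant of an `n × n` submatrix of `A`
(an `n × n` submatrix is obtained by selecting `n` pairwise distinct rows). -/
def maxDet {m n : ℕ} (A : Matrix (Fin m) (Fin n) ℤ) : ℕ :=
  (Finset.univ.filter fun f : Fin n → Fin m => Function.Injective f).sup
    fun f => ((A.submatrix f id).det).natAbs

/-- The set of nonzero absolute values of determinants of `n × n` submatrices of `A`. -/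
def detVals {m n : ℕ} (A : Matrix (Fin m) (Fin n) ℤ) : Finset ℕ :=
  ((Finset.univ.filter fun f : Fin n → Fin m => Function.Injective f).image
    fun f => ((A.submatrix f id).det).natAbs).erase 0

/-- `Δ_lcm(A)`: least common multiple of the nonzero absolute values of the determinants
of `n × n` submatrices of `A`. -/
def lcmDet {m n : ℕ} (A : Matrix (Fin m) (Fin n) ℤ) : ℕ := (detVals A).lcm id

/-- `Δ_gcd(A)`: greatest common divisor of the nonzero absolute values of the determinants
of `n × n` submatrices of `A`. -/
def gcdDet {m n : ℕ} (A : Matrix (Fin m) (Fin n) ℤ) : ℕ := (detVals A).gcd id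

/-- `δ(A)`: the minimum absolute value of the determinant of an `n × n` submatrix of `A`. -/
noncomputable def minDet {m n : ℕ} (A : Matrix (Fin m) (Fin n) ℤ) : ℕ :=
  sInf {d : ℕ | ∃ f : Fin n → Fin m, Function.Injective f ∧ ((A.submatrix f id).det).natAbs = d}

private lemma aux_tight_span {m n : ℕ} (R : Matrix (Fin m) (Fin n) ℝ) (b : Fin m → ℝ)
    (x : Fin n → ℝ)
    (hx : x ∈ Set.extremePoints ℝ {y | ∀ i, R.mulVec y i ≤ b i}) :
    Submodule.span ℝ {v : Fin n → ℝ | ∃ i, R.mulVec x i = b i ∧ R i = v} = ⊤ := by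
  classical
  obtain ⟨hxP, hext⟩ := hx
  by_contra hlt
  obtain ⟨φ, hφ0, hφ⟩ := Submodule.exists_dual_map_eq_bot_of_lt_top
    (lt_top_iff_ne_top.mpr hlt) inferInstance
  set d : Fin n → ℝ := fun j => φ (fun k => if j = k then 1 else 0) with hd
  have hd0 : d ≠ 0 := by
    intro h
    apply hφ0
    refine LinearMap.ext fun y => ?_
    rw [LinearMap.pi_apply_eq_sum_univ φ y]
    simp only [LinearMap.zero_apply]
    have : ∀ j, φ (fun k => if j = k then 1 else 0) = 0 := fun j => congrFun h j
    simp [this]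
  have hdT : ∀ i, R.mulVec x i = b i → R.mulVec d i = 0 := by
    intro i hi
    have h0 : φ (R i) = 0 := by
      have hmem : φ (R i) ∈ Submodule.map φ (Submodule.span ℝ
          {v : Fin n → ℝ | ∃ i, R.mulVec x i = b i ∧ R i = v}) :=
        ⟨R i, Submodule.subset_span ⟨i, hi, rfl⟩, rfl⟩
      rw [hφ] at hmem
      simpa using hmem
    have : R.mulVec d i = φ (R i) := by
      rw [LinearMap.pi_apply_eq_sum_univ φ (R i)]
      simp [Matrix.mulVec, dotProduct, hd, smul_eq_mul]
    rw [this, h0]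
  -- perturbation
  have hev : ∀ i, ∀ᶠ t : ℝ in nhds 0, R.mulVec (x + t • d) i ≤ b i := by
    intro i
    have hcalc : ∀ t : ℝ, R.mulVec (x + t • d) i = R.mulVec x i + t * R.mulVec d i := by
      intro t
      simp [Matrix.mulVec_add, Matrix.mulVec_smul, smul_eq_mul, mul_comm]
    by_cases hi : R.mulVec x i = b i
    · filter_upwards with t
      rw [hcalc, hdT i hi, hi]; simp
    · have hlt' : R.mulVec x i < b i := lt_of_le_of_ne (hxP i) hi
      have hcont : Continuous fun t : ℝ => R.mulVec x i + t * R.mulVec d i :=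
        continuous_const.add (continuous_id.mul continuous_const)
      have hopen : IsOpen {t : ℝ | R.mulVec x i + t * R.mulVec d i < b i} :=
        isOpen_lt hcont continuous_const
      have h0 : (0:ℝ) ∈ {t : ℝ | R.mulVec x i + t * R.mulVec d i < b i} := by
        simpa using hlt'
      filter_upwards [hopen.mem_nhds h0] with t ht
      rw [hcalc]; exact le_of_lt ht
  have hall : ∀ᶠ t : ℝ in nhds 0, (x + t • d) ∈ {y | ∀ i, R.mulVec y i ≤ b i} :=
    Filter.eventually_all.2 hev
  obtain ⟨ε, hε, hball⟩ := Metric.eventually_nhds_iff.1 hall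
  have h1 : (x + (ε/2) • d) ∈ {y | ∀ i, R.mulVec y i ≤ b i} := by
    apply hball
    rw [Real.dist_eq, sub_zero, abs_of_pos (by linarith)]; linarith
  have h2 : (x + (-(ε/2)) • d) ∈ {y | ∀ i, R.mulVec y i ≤ b i} := by
    apply hball
    rw [Real.dist_eq, sub_zero, abs_of_neg (by linarith)]; linarith
  have hmem : x ∈ openSegment ℝ (x + (ε/2) • d) (x + (-(ε/2)) • d) := by
    refine ⟨1/2, 1/2, by norm_num, by norm_num, by norm_num, ?_⟩
    module
  have := hext h1 h2 hmem
  have hd' : (ε/2) • d = 0 := by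
    have := congrArg (fun y => y - x) this
    simpa [add_sub_cancel_left] using this
  rcases smul_eq_zero.1 hd' with h | h
  · exact absurd h (by positivity)
  · exact hd0 h


private lemma aux_submatrix {m n : ℕ} (R : Matrix (Fin m) (Fin n) ℝ) (T : Set (Fin m))
    (hspan : Submodule.span ℝ {v : Fin n → ℝ | ∃ i ∈ T, R i = v} = ⊤) :
    ∃ f : Fin n → Fin m, Function.Injective f ∧ (∀ j, f j ∈ T) ∧
      (R.submatrix f id).det ≠ 0 := by
  classical
  obtain ⟨s, hs_sub, hs_span, hs_ind⟩ :=
    exists_linearIndependent ℝ {v : Fin n → ℝ | ∃ i ∈ T, R i = v}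
  rw [hspan] at hs_span
  have hsfin : s.Finite := hs_ind.setFinite
  haveI := hsfin.fintype
  let bs : Module.Basis s ℝ (Fin n → ℝ) := Module.Basis.mk hs_ind (by rw [Subtype.range_coe, hs_span])
  have hcard : Fintype.card s = n := by
    have h1 := Module.finrank_eq_card_basis bs
    have h2 : Module.finrank ℝ (Fin n → ℝ) = n := by simp
    omega
  let e : Fin n ≃ s := (Fintype.equivFinOfCardEq hcard).symm
  -- choose row index for each vector of s
  have hchoose : ∀ v : s, ∃ i, i ∈ T ∧ R i = (v : Fin n → ℝ) := fun v => hs_sub v.2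
  choose g hgT hgR using hchoose
  have hginj : Function.Injective g := by
    intro v w h
    apply Subtype.ext
    rw [← hgR v, ← hgR w, h]
  refine ⟨fun j => g (e j), hginj.comp e.injective, fun j => hgT (e j), ?_⟩
  intro hdet
  obtain ⟨v, hv0, hv⟩ := Matrix.exists_vecMul_eq_zero_iff.2 hdet
  have hind := hs_ind.comp e e.injective
  rw [Fintype.linearIndependent_iff] at hind
  have : ∀ j, v j = 0 := by
    apply hind
    funext k
    have := congrFun hv k
    simpa [Matrix.vecMul, dotProduct, Matrix.submatrix, hgR, Finset.sum_apply,
      smul_eq_mul] using this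
  exact hv0 (funext this)


private lemma aux_cramer {m n : ℕ} (A : Matrix (Fin m) (Fin n) ℤ) (b : Fin m → ℤ)
    (hdvd : ∀ i, (lcmDet A : ℤ) ∣ b i)
    (x : Fin n → ℝ) (f : Fin n → Fin m) (hf : Function.Injective f)
    (hdet : (A.submatrix f id).det ≠ 0)
    (htight : ∀ j, ((A.map (Int.cast : ℤ → ℝ)).mulVec x) (f j) = (b (f j) : ℝ)) :
    ∃ z : Fin n → ℤ, x = fun i => (z i : ℝ) := by
  classical
  set N : Matrix (Fin n) (Fin n) ℤ := A.submatrix f id with hN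
  set D : ℤ := N.det with hD
  have hDmem : D.natAbs ∈ detVals A := by
    refine Finset.mem_erase.2 ⟨by simpa using hdet, ?_⟩
    exact Finset.mem_image.2 ⟨f, Finset.mem_filter.2 ⟨Finset.mem_univ _, hf⟩, rfl⟩
  have hDlcm : D ∣ (lcmDet A : ℤ) := by
    have : D.natAbs ∣ lcmDet A := by
      exact Finset.dvd_lcm (f := (id : ℕ → ℕ)) hDmem
    exact Int.natAbs_dvd.mp (Int.ofNat_dvd.mpr this)
  have hDb : ∀ i, D ∣ b i := fun i => hDlcm.trans (hdvd i)
  set v : Fin n → ℤ := (adjugate N).mulVec (fun j => b (f j)) with hv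
  have hdivv : ∀ j, D ∣ v j := by
    intro j
    rw [hv]
    simp only [Matrix.mulVec, dotProduct]
    exact Finset.dvd_sum fun k _ => Dvd.dvd.mul_left (hDb (f k)) _
  -- real side
  set M : Matrix (Fin n) (Fin n) ℝ := N.map (Int.cast : ℤ → ℝ) with hM
  have hMdet : M.det = (D : ℝ) := by
    have h := RingHom.map_det (Int.castRingHom ℝ) N
    simp only [RingHom.mapMatrix_apply] at h
    rw [hM]
    exact h.symm
  have hMx : M.mulVec x = fun j => (b (f j) : ℝ) := by
    funext j
    have := htight j
    simp only [Matrix.mulVec, dotProduct, Matrix.map_apply, hM, hN,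
      Matrix.submatrix_apply, id] at this ⊢
    exact this
  have key : ∀ j, (D : ℝ) * x j = (v j : ℝ) := by
    intro j
    have h1 : (adjugate M).mulVec (M.mulVec x) = M.det • x := by
      rw [Matrix.mulVec_mulVec, Matrix.adjugate_mul, Matrix.smul_mulVec,
        Matrix.one_mulVec]
    have h2 : (adjugate M).mulVec (fun j => (b (f j) : ℝ)) j = (v j : ℝ) := by
      have ha := RingHom.map_adjugate (Int.castRingHom ℝ) N
      simp only [RingHom.mapMatrix_apply, Int.coe_castRingHom] at ha
      rw [hv, hM, ← ha]
      simp only [Matrix.mulVec, dotProduct, Matrix.map_apply]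
      push_cast
      rfl
    have := congrFun h1 j
    rw [hMx] at this
    rw [h2] at this
    rw [this, hMdet]
    simp [smul_eq_mul]
  have hD0 : (D : ℝ) ≠ 0 := Int.cast_ne_zero.2 hdet
  refine ⟨fun j => v j / D, funext fun j => ?_⟩
  have hvj : D * (v j / D) = v j := Int.mul_ediv_cancel' (hdivv j)
  have : (D : ℝ) * x j = (D : ℝ) * ((v j / D : ℤ) : ℝ) := by
    rw [key j]
    exact_mod_cast congrArg (Int.cast : ℤ → ℝ) hvj.symm
  exact mul_left_cancel₀ hD0 this


/-- If `A` has rank `n`, `P(A,b)` is a nonempty bounded full-dimensional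
polytope, and every component of `b` is divisible by `Δ_lcm(A)`, then every vertex
(extreme point) of `P(A,b)` is an integer point. -/
theorem vertices_integral_of_lcm_dvd {m n : ℕ} (A : Matrix (Fin m) (Fin n) ℤ)
    (b : Fin m → ℤ)
    (hrank : A.rank = n)
    (hne : (poly A b).Nonempty)
    (hbdd : Bornology.IsBounded (poly A b))
    (hfull : (interior (poly A b)).Nonempty)
    (hdvd : ∀ i, (lcmDet A : ℤ) ∣ b i)
    (x : Fin n → ℝ) (hx : x ∈ Set.extremePoints ℝ (poly A b)) :
    ∃ z : Fin n → ℤ, x = fun i => (z i : ℝ) := by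
  classical
  set R : Matrix (Fin m) (Fin n) ℝ := A.map (Int.cast : ℤ → ℝ) with hR
  set b' : Fin m → ℝ := fun i => (b i : ℝ) with hb'
  have hx' : x ∈ Set.extremePoints ℝ {y | ∀ i, R.mulVec y i ≤ b' i} := hx
  have hspan := aux_tight_span R b' x hx'
  have hspan' : Submodule.span ℝ
      {v : Fin n → ℝ | ∃ i ∈ {i : Fin m | R.mulVec x i = b' i}, R i = v} = ⊤ := hspan
  obtain ⟨f, hfinj, hfT, hfdet⟩ := aux_submatrix R _ hspan'
  have hsub : R.submatrix f id = (A.submatrix f id).map (Int.cast : ℤ → ℝ) := by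
    ext j k
    simp [hR, Matrix.submatrix_apply, Matrix.map_apply]
  have hdetZ : (A.submatrix f id).det ≠ 0 := by
    intro h
    apply hfdet
    have hmd := RingHom.map_det (Int.castRingHom ℝ) (A.submatrix f id)
    simp only [RingHom.mapMatrix_apply, Int.coe_castRingHom] at hmd
    rw [hsub, ← hmd, h]
    simp
  exact aux_cramer A b hdvd x f hfinj hdetZ fun j => hfT j
end

section
/- Let A be an n×n integer matrix with Δ = |det(A)| > 0, let B be an n×s integer matrix, and b ∈ ℤ^n. Let M = {y ∈ ℤ^s : y ≥ 0 and there exists x ∈ ℤ^n with Ax + By = b}. Call y ∈ M irreducible if for all u, v ∈ ℤ^s with 0 ≤ u ≤ y, 0 ≤ v ≤ y (componentwise) and u ≠ v, the vector B(u − v) does not lie in the lattice A·ℤ^n. Then every irreducible point y ∈ M satisfies ∏_{k=1}^{s} (1 + y_k) ≤ Δ. -/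
open Matrix

/-- `A.mulVec` is injective when `det A ≠ 0` (over `ℤ`). -/
lemma aux_mulVecLin_injective {n : ℕ} (A : Matrix (Fin n) (Fin n) ℤ) (hA : A.det ≠ 0) :
    Function.Injective A.mulVecLin := by
  intro x x' h
  have hd : A.mulVec (x - x') = 0 := by
    simp only [Matrix.mulVec_sub]
    simpa [sub_eq_zero] using h
  have h2 : (A.adjugate).mulVec (A.mulVec (x - x')) = A.det • (x - x') := by
    rw [Matrix.mulVec_mulVec, Matrix.adjugate_mul, Matrix.smul_mulVec, Matrix.one_mulVec]
  rw [hd, Matrix.mulVec_zero] at h2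
  have : x - x' = 0 := by
    funext i
    have := congrFun h2.symm i
    simp only [Pi.smul_apply, smul_eq_mul, Pi.zero_apply] at this
    rcases mul_eq_zero.mp this with h | h
    · exact absurd h hA
    · simpa using h
  exact sub_eq_zero.mp this

/-- The index of the lattice `A·ℤ^n` in `ℤ^n` is `|det A|`. -/
lemma aux_index_range {n : ℕ} (A : Matrix (Fin n) (Fin n) ℤ) (hA : A.det ≠ 0) :
    (LinearMap.range A.mulVecLin).toAddSubgroup.index = A.det.natAbs := by
  classical
  set N := LinearMap.range A.mulVecLin with hN
  have hinj := aux_mulVecLin_injective A hA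
  let e₁ : (Fin n → ℤ) ≃ₗ[ℤ] N := LinearEquiv.ofInjective _ hinj
  obtain ⟨m, snf⟩ := N.smithNormalForm (Pi.basisFun ℤ (Fin n))
  obtain ⟨bM, bN, f, a, hsnf⟩ := snf
  have hm : m = n := by
    have h1 : Module.finrank ℤ N = m := by
      rw [Module.finrank_eq_card_basis bN, Fintype.card_fin]
    have h2 : Module.finrank ℤ N = n := by
      rw [← e₁.finrank_eq]
      simp [Module.finrank_pi]
    omega
  subst hm
  -- index computation from Smith normal form
  have hidx := (Module.Basis.SmithNormalForm.mk bM bN f a hsnf).toAddSubgroup_index_eq_pow_mul_prod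
  simp only [Fintype.card_fin, Nat.sub_self, pow_zero, one_mul,
    Ideal.span_singleton_toAddSubgroup_eq_zmultiples, Int.index_zmultiples] at hidx
  rw [hidx]
  -- determinant computation
  let σ : Equiv.Perm (Fin m) := Equiv.ofBijective f ((Finite.injective_iff_bijective).mp f.injective)
  let e₂ : (Fin m → ℤ) ≃ₗ[ℤ] N := bM.equiv bN (Equiv.refl _)
  have he₁ : N.subtype ∘ₗ (e₁ : (Fin m → ℤ) →ₗ[ℤ] N) = A.mulVecLin := by
    ext x
    rfl
  have hass := LinearMap.associated_det_comp_equiv (N.subtype) e₁ e₂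
  rw [he₁] at hass
  have hdet1 : LinearMap.det A.mulVecLin = A.det := by
    rw [show A.mulVecLin = Matrix.toLin' A from rfl, LinearMap.det_toLin']
  have hD : LinearMap.toMatrix bM bM (N.subtype ∘ₗ (e₂ : (Fin m → ℤ) →ₗ[ℤ] N))
      = (Matrix.diagonal a).submatrix σ.symm id := by
    ext i j
    rw [LinearMap.toMatrix_apply]
    have : (N.subtype ∘ₗ (e₂ : (Fin m → ℤ) →ₗ[ℤ] N)) (bM j) = a j • bM (f j) := by
      simp only [LinearMap.comp_apply, LinearEquiv.coe_coe]
      have : e₂ (bM j) = bN j := by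
        simp [e₂, Module.Basis.equiv_apply]
      rw [this, ← hsnf j]
      rfl
    rw [this, _root_.map_smul]
    have hrhs : ((Matrix.diagonal a).submatrix σ.symm id) i j
        = if f j = i then a j else 0 := by
      rw [Matrix.submatrix_apply, id_eq, Matrix.diagonal_apply]
      by_cases h : f j = i
      · have hs : σ.symm i = j := by rw [← h]; exact σ.symm_apply_apply j
        simp [hs, h]
      · have hs : σ.symm i ≠ j := fun hc => h (by rw [← hc]; exact σ.apply_symm_apply i)
        simp [hs, h]
    rw [hrhs]
    simp [Finsupp.single_apply]
  have hdet2 : LinearMap.det (N.subtype ∘ₗ (e₂ : (Fin m → ℤ) →ₗ[ℤ] N))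
      = Equiv.Perm.sign σ.symm * ∏ i, a i := by
    rw [← LinearMap.det_toMatrix bM, hD, Matrix.det_permute, Matrix.det_diagonal]
    norm_cast
  have habs : A.det.natAbs = (∏ i, a i).natAbs := by
    have h1 : A.det.natAbs = (LinearMap.det (N.subtype ∘ₗ (e₂ : (Fin m → ℤ) →ₗ[ℤ] N))).natAbs := by
      rw [← hdet1]
      exact Int.natAbs_eq_iff_associated.mpr hass
    rw [h1, hdet2]
    rcases Int.units_eq_one_or (Equiv.Perm.sign σ.symm) with h | h <;> simp [h]
  rw [habs]
  exact (map_prod Int.natAbsHom a Finset.univ).symm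

/-- **Gomory.** Let `A` be an `n × n` integer matrix with `Δ = |det A| > 0`,
`B` an `n × s` integer matrix, `b ∈ ℤ^n`, and let
`M = {y ∈ ℤ^s : y ≥ 0, ∃ x ∈ ℤ^n, Ax + By = b}`. If `y ∈ M` is irreducible (for all
`u ≠ v` with `0 ≤ u ≤ y`, `0 ≤ v ≤ y`, the vector `B(u − v)` is not in the lattice `A·ℤ^n`),
then `∏ k, (1 + y k) ≤ Δ`. -/
theorem irreducible_point_product_le_det {n s : ℕ} (A : Matrix (Fin n) (Fin n) ℤ)
    (hA : A.det ≠ 0) (B : Matrix (Fin n) (Fin s) ℤ) (b : Fin n → ℤ)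
    (y : Fin s → ℤ) (hy0 : ∀ k, 0 ≤ y k)
    (hyM : ∃ x : Fin n → ℤ, A.mulVec x + B.mulVec y = b)
    (hirr : ∀ u v : Fin s → ℤ, (∀ k, 0 ≤ u k ∧ u k ≤ y k) → (∀ k, 0 ≤ v k ∧ v k ≤ y k) →
      u ≠ v → ¬ ∃ z : Fin n → ℤ, B.mulVec (u - v) = A.mulVec z) :
    (∏ k, (1 + y k)) ≤ |A.det| := by
  classical
  set N := LinearMap.range A.mulVecLin with hN
  set H := N.toAddSubgroup with hH
  have hidx : H.index = A.det.natAbs := aux_index_range A hA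
  have hfinQ : Finite ((Fin n → ℤ) ⧸ H) := by
    refine Nat.finite_of_card_ne_zero ?_
    rw [← AddSubgroup.index, hidx]
    exact Int.natAbs_ne_zero.mpr hA
  have := Fintype.ofFinite ((Fin n → ℤ) ⧸ H)
  set t : Finset (Fin s → ℤ) := Fintype.piFinset (fun k => Finset.Icc 0 (y k)) with ht
  have hcard : t.card ≤ A.det.natAbs := by
    rw [← hidx, AddSubgroup.index, Nat.card_eq_fintype_card, ← Finset.card_univ]
    refine Finset.card_le_card_of_injOn (fun u => QuotientAddGroup.mk (B.mulVec u))
      (fun u _ => Finset.mem_univ _) ?_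
    intro u hu v hv heq
    by_contra hne
    have hu' : ∀ k, 0 ≤ u k ∧ u k ≤ y k := by
      intro k
      have := (Fintype.mem_piFinset.mp hu) k
      simpa [Finset.mem_Icc] using this
    have hv' : ∀ k, 0 ≤ v k ∧ v k ≤ y k := by
      intro k
      have := (Fintype.mem_piFinset.mp hv) k
      simpa [Finset.mem_Icc] using this
    have hmem : -(B.mulVec u) + B.mulVec v ∈ H := (QuotientAddGroup.eq).mp heq
    have hmem' : B.mulVec (v - u) ∈ N := by
      have : B.mulVec (v - u) = -(B.mulVec u) + B.mulVec v := by
        rw [Matrix.mulVec_sub]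
        abel
      rw [this]
      exact hmem
    obtain ⟨z, hz⟩ := hmem'
    exact hirr v u hv' hu' (fun h => hne h.symm) ⟨z, hz.symm⟩
  have htcard : t.card = ∏ k, (y k + 1).toNat := by
    rw [ht, Fintype.card_piFinset]
    refine Finset.prod_congr rfl fun k _ => ?_
    rw [Int.card_Icc]
    congr 1
    ring
  have : ((t.card : ℤ)) = ∏ k, (1 + y k) := by
    rw [htcard]
    push_cast
    refine Finset.prod_congr rfl fun k _ => ?_
    rw [Int.toNat_of_nonneg (by linarith [hy0 k])]
    ring
  calc (∏ k, (1 + y k)) = (t.card : ℤ) := this.symm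
    _ ≤ (A.det.natAbs : ℤ) := by exact_mod_cast hcard
    _ = |A.det| := (Int.abs_eq_natAbs _).symm
end

section
/- Let A be an n×n integer matrix with det(A) ≠ 0, let B be an n×s integer matrix, and b ∈ ℤ^n. Let M = {y ∈ ℤ^s : y ≥ 0 and there exists x ∈ ℤ^n with Ax + By = b}, viewed as a subset of ℝ^s. If y is an extreme point of the convex hull of M, then y is irreducible, i.e. for all u, v ∈ ℤ^s with 0 ≤ u ≤ y, 0 ≤ v ≤ y (componentwise) and u ≠ v, the vector B(u − v) does not lie in the lattice A·ℤ^n. -/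
open Matrix

/-- **Gomory.** Let `A` be an `n × n` integer matrix with `det A ≠ 0`, `B` an
`n × s` integer matrix, `b ∈ ℤ^n`, and `M = {y ∈ ℤ^s : y ≥ 0, ∃ x ∈ ℤ^n, Ax + By = b}`
viewed as a subset of `ℝ^s`. If `y` is an extreme point of the convex hull of `M`, then `y`
is irreducible: for all `u ≠ v` with `0 ≤ u ≤ y`, `0 ≤ v ≤ y` componentwise,
`B(u − v)` does not lie in the lattice `A·ℤ^n`. -/
theorem extreme_point_irreducible {n s : ℕ} (A : Matrix (Fin n) (Fin n) ℤ)
    (hA : A.det ≠ 0) (B : Matrix (Fin n) (Fin s) ℤ) (b : Fin n → ℤ)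
    (M : Set (Fin s → ℝ))
    (hM : M = {w : Fin s → ℝ | ∃ y : Fin s → ℤ, (∀ k, 0 ≤ y k) ∧
      (∃ x : Fin n → ℤ, A.mulVec x + B.mulVec y = b) ∧ w = fun k => (y k : ℝ)})
    (y : Fin s → ℤ)
    (hy : (fun k => (y k : ℝ)) ∈ Set.extremePoints ℝ (convexHull ℝ M)) :
    ∀ u v : Fin s → ℤ, (∀ k, 0 ≤ u k ∧ u k ≤ y k) → (∀ k, 0 ≤ v k ∧ v k ≤ y k) →
      u ≠ v → ¬ ∃ z : Fin n → ℤ, B.mulVec (u - v) = A.mulVec z := by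

  intro u v hu hv huv hzz
  obtain ⟨z, hz⟩ := hzz
  have hyM : (fun k => (y k : ℝ)) ∈ M := extremePoints_convexHull_subset hy
  rw [hM] at hyM
  obtain ⟨y', hy'pos, ⟨x, hx⟩, hyeq⟩ := hyM
  have hyy' : y' = y := by
    funext k
    have h := congrFun hyeq k
    exact_mod_cast h.symm
  rw [hyy'] at hy'pos hx
  set y₁ : Fin s → ℤ := y - u + v with hy1
  set y₂ : Fin s → ℤ := y + u - v with hy2
  have hBz : B.mulVec u - B.mulVec v = A.mulVec z := by
    rw [← Matrix.mulVec_sub]; exact hz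
  have hm1 : (fun k => ((y₁ k : ℝ))) ∈ M := by
    rw [hM]
    refine ⟨y₁, ?_, ⟨x + z, ?_⟩, rfl⟩
    · intro k
      have h1 := hu k; have h2 := hv k
      simp only [hy1, Pi.add_apply, Pi.sub_apply]
      omega
    · have : A.mulVec (x + z) + B.mulVec y₁ = A.mulVec x + B.mulVec y := by
        rw [hy1, Matrix.mulVec_add, Matrix.mulVec_add, Matrix.mulVec_sub, ← hBz]
        abel
      rw [this, hx]
  have hm2 : (fun k => ((y₂ k : ℝ))) ∈ M := by
    rw [hM]
    refine ⟨y₂, ?_, ⟨x - z, ?_⟩, rfl⟩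
    · intro k
      have h1 := hu k; have h2 := hv k
      simp only [hy2, Pi.add_apply, Pi.sub_apply]
      omega
    · have : A.mulVec (x - z) + B.mulVec y₂ = A.mulVec x + B.mulVec y := by
        rw [hy2, Matrix.mulVec_sub, Matrix.mulVec_sub, Matrix.mulVec_add, ← hBz]
        abel
      rw [this, hx]
  have hc1 : (fun k => ((y₁ k : ℝ))) ∈ convexHull ℝ M := subset_convexHull ℝ M hm1
  have hc2 : (fun k => ((y₂ k : ℝ))) ∈ convexHull ℝ M := subset_convexHull ℝ M hm2
  have hopen : (fun k => (y k : ℝ)) ∈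
      openSegment ℝ (fun k => ((y₁ k : ℝ))) (fun k => ((y₂ k : ℝ))) := by
    refine ⟨1/2, 1/2, by norm_num, by norm_num, by norm_num, ?_⟩
    funext k
    simp only [hy1, hy2, Pi.add_apply, Pi.smul_apply, Pi.sub_apply, smul_eq_mul]
    push_cast
    ring
  have heq := hy.2 hc1 hc2 hopen
  obtain ⟨k, hk⟩ := Function.ne_iff.mp huv
  have h := congrFun heq k
  simp only [hy1, Pi.add_apply, Pi.sub_apply] at h
  have hint : y k - u k + v k = y k := by exact_mod_cast h
  omega
end

section
/- Let A be an n×n integer matrix with Δ = |det(A)| > 0, let B be an n×s integer matrix, and b ∈ ℤ^n. Let M = {y ∈ ℤ^s : y ≥ 0 and there exists x ∈ ℤ^n with Ax + By = b}. If y is an extreme point of the convex hull of M in ℝ^s, then ∏_{k=1}^{s} (1 + y_k) ≤ Δ. -/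
open Matrix

lemma index_range_toLin' {n : ℕ} (A : Matrix (Fin n) (Fin n) ℤ) (hA : A.det ≠ 0) :
    (LinearMap.range (Matrix.toLin' A)).toAddSubgroup.index = A.det.natAbs := by
  classical
  set N := LinearMap.range (Matrix.toLin' A) with hN
  have hinj : Function.Injective (Matrix.toLin' A) := by
    rw [← LinearMap.ker_eq_bot]
    ext x
    simp only [LinearMap.mem_ker, Submodule.mem_bot]
    constructor
    · intro h
      have h2 : A.adjugate *ᵥ (A *ᵥ x) = 0 := by
        rw [Matrix.toLin'_apply] at h; rw [h, Matrix.mulVec_zero]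
      rw [Matrix.mulVec_mulVec, Matrix.adjugate_mul, Matrix.smul_mulVec,
        Matrix.one_mulVec] at h2
      funext i
      have := congrFun h2 i
      simpa [hA] using this
    · rintro rfl; simp
  obtain ⟨m, snf⟩ := N.smithNormalForm (Pi.basisFun ℤ (Fin n))
  let e1 : (Fin n → ℤ) ≃ₗ[ℤ] N := LinearEquiv.ofInjective _ hinj
  have hmn : m = n := by
    have h1 : Module.finrank ℤ N = m := Module.finrank_eq_card_basis snf.bN |>.trans (by simp)
    have h2 : Module.finrank ℤ N = n := by
      rw [← e1.finrank_eq]; simp [Module.finrank_fin_fun]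
    omega
  obtain rfl : n = m := hmn.symm
  -- index computation
  have hidx : N.toAddSubgroup.index = ∏ i, (snf.a i).natAbs := by
    rw [snf.toAddSubgroup_index_eq_ite]
    simp [Ideal.span_singleton_toAddSubgroup_eq_zmultiples, Int.index_zmultiples]
  -- determinant computation
  have hfb : Function.Bijective snf.f :=
    (Finite.injective_iff_bijective).mp snf.f.injective
  let fe : Fin n ≃ Fin n := Equiv.ofBijective _ hfb
  let P := LinearMap.toMatrix snf.bN snf.bM (N.subtype)
  have hPd : P = (Matrix.diagonal snf.a).submatrix (⇑fe.symm) id := by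
    ext i j
    simp only [P, LinearMap.toMatrix_apply, Submodule.coe_subtype,
      Matrix.submatrix_apply, Matrix.diagonal_apply, id_eq]
    rw [snf.snf, _root_.map_smul, snf.bM.repr_self]
    by_cases h : fe.symm i = j
    · have hij : snf.f j = i := by
        have : fe j = i := by rw [← h]; simp
        exact this
      have h2 : fe.symm (snf.f j) = j := by
        have := fe.symm_apply_apply j
        simpa [fe] using this
      simp [h, ← hij, h2, Finsupp.single_apply]
    · have hij : ¬ (snf.f j = i) := by
        intro hh
        exact h (by
          have : fe j = i := hh
          rw [← this]; simp)
      simp [h, hij, Finsupp.single_apply]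
  have hdetP : P.det.natAbs = ∏ i, (snf.a i).natAbs := by
    rw [hPd]
    rw [show ((Matrix.diagonal snf.a).submatrix (⇑fe.symm) id) =
      (Matrix.diagonal snf.a).submatrix (⇑(fe.symm : Equiv.Perm (Fin n))) id from rfl]
    rw [Matrix.det_permute]
    rcases Int.units_eq_one_or (Equiv.Perm.sign fe.symm) with h | h <;>
      · simp [h, Matrix.det_diagonal]
        exact map_prod Int.natAbsHom (fun i => snf.a i) Finset.univ
  -- relate to det A
  have hcomp : Matrix.toLin' A = N.subtype ∘ₗ (e1 : (Fin n → ℤ) →ₗ[ℤ] N) := by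
    refine LinearMap.ext fun x => ?_
    exact (LinearEquiv.ofInjective_apply (Matrix.toLin' A) (h := hinj) x).symm
  have hdetA : A.det = P.det * ((LinearMap.toMatrix snf.bM snf.bN) (e1 : (Fin n → ℤ) →ₗ[ℤ] N)).det := by
    have := LinearMap.det_toMatrix snf.bM (Matrix.toLin' A)
    rw [hcomp, LinearMap.toMatrix_comp snf.bM snf.bN snf.bM] at this
    rw [← LinearMap.det_toLin' A, hcomp, ← this, Matrix.det_mul]
  have hU : IsUnit ((LinearMap.toMatrix snf.bM snf.bN) (e1 : (Fin n → ℤ) →ₗ[ℤ] N)).det :=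
    LinearEquiv.isUnit_det e1 snf.bM snf.bN
  rw [hidx, hdetA, Int.natAbs_mul, ← hdetP]
  rcases Int.isUnit_iff.mp hU with h | h <;> simp [h]

/-- **Gomory.** Let `A` be an `n × n` integer matrix with `Δ = |det A| > 0`,
`B` an `n × s` integer matrix, `b ∈ ℤ^n`, and `M = {y ∈ ℤ^s : y ≥ 0, ∃ x ∈ ℤ^n, Ax + By = b}`
viewed as a subset of `ℝ^s`. If `y` is an extreme point of the convex hull of `M`, then
`∏ k, (1 + y k) ≤ Δ`. -/
theorem extreme_point_product_le_det {n s : ℕ} (A : Matrix (Fin n) (Fin n) ℤ)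
    (hA : A.det ≠ 0) (B : Matrix (Fin n) (Fin s) ℤ) (b : Fin n → ℤ)
    (M : Set (Fin s → ℝ))
    (hM : M = {w : Fin s → ℝ | ∃ y : Fin s → ℤ, (∀ k, 0 ≤ y k) ∧
      (∃ x : Fin n → ℤ, A.mulVec x + B.mulVec y = b) ∧ w = fun k => (y k : ℝ)})
    (y : Fin s → ℤ)
    (hy : (fun k => (y k : ℝ)) ∈ Set.extremePoints ℝ (convexHull ℝ M)) :
    (∏ k, (1 + y k)) ≤ |A.det| := by
  classical
  subst hM
  -- y is in M
  have hyM := extremePoints_convexHull_subset hy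
  obtain ⟨y', hy'nn, ⟨x, hx⟩, hyw⟩ := hyM
  have hy'y : y' = y := by
    funext k
    have := congrFun hyw k
    exact_mod_cast this.symm
  rw [hy'y] at hy'nn hx
  clear hyw hy'y
  by_contra hlt
  push_neg at hlt
  -- quotient group
  set N := LinearMap.range (Matrix.toLin' A) with hN
  set H := N.toAddSubgroup with hH
  have hcard : Nat.card ((Fin n → ℤ) ⧸ H) = A.det.natAbs := index_range_toLin' A hA
  have hfin : Finite ((Fin n → ℤ) ⧸ H) := by
    refine Nat.finite_of_card_ne_zero ?_
    rw [hcard]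
    simpa using hA
  have : Fintype ((Fin n → ℤ) ⧸ H) := Fintype.ofFinite _
  -- the box
  set box : Finset (Fin s → ℤ) := Finset.Icc 0 y with hbox
  have hboxcard : (box.card : ℤ) = ∏ k, (1 + y k) := by
    rw [hbox, Pi.card_Icc]
    push_cast [Int.card_Icc]
    refine Finset.prod_congr rfl fun k _ => ?_
    rw [Pi.zero_apply, sub_zero, Int.toNat_of_nonneg (by linarith [hy'nn k])]
    push_cast
    ring
  have hgt : Fintype.card ((Fin n → ℤ) ⧸ H) < box.card := by
    have h1 : (Fintype.card ((Fin n → ℤ) ⧸ H) : ℤ) < (box.card : ℤ) := by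
      rw [hboxcard, ← Nat.card_eq_fintype_card, hcard, ← Int.abs_eq_natAbs]
      exact hlt
    exact_mod_cast h1
  -- pigeonhole
  obtain ⟨z₁, hz₁, z₂, hz₂, hne, heq⟩ :=
    Finset.exists_ne_map_eq_of_card_lt_of_maps_to
      (t := (Finset.univ : Finset ((Fin n → ℤ) ⧸ H)))
      (by simpa using hgt)
      (f := fun z => ((QuotientAddGroup.mk (B.mulVec z)) : (Fin n → ℤ) ⧸ H))
      (fun z _ => Finset.mem_univ _)
  rw [Finset.mem_Icc] at hz₁ hz₂
  obtain ⟨w, hw⟩ : ∃ w, A.mulVec w = B.mulVec z₂ - B.mulVec z₁ := by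
    rw [QuotientAddGroup.eq] at heq
    obtain ⟨w, hw⟩ := heq
    exact ⟨w, by rw [show Matrix.toLin' A w = A.mulVec w from rfl] at hw; rw [hw]; abel⟩
  -- the two points
  set y₁ := y - z₁ + z₂ with hy₁
  set y₂ := y + z₁ - z₂ with hy₂
  have h₁M : (fun k => ((y₁ k : ℤ) : ℝ)) ∈
      {w : Fin s → ℝ | ∃ y : Fin s → ℤ, (∀ k, 0 ≤ y k) ∧
        (∃ x : Fin n → ℤ, A.mulVec x + B.mulVec y = b) ∧ w = fun k => (y k : ℝ)} := by
    refine ⟨y₁, fun k => ?_, ⟨x - w, ?_⟩, rfl⟩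
    · have := (hz₁.2) k
      have := (hz₂.1) k
      simp only [hy₁, Pi.add_apply, Pi.sub_apply] at *
      have h := (hz₁.2) k
      have h0 := (hz₂.1) k
      simp only [Pi.zero_apply] at h0
      linarith
    · rw [hy₁, Matrix.mulVec_add, Matrix.mulVec_sub, Matrix.mulVec_sub, hw]
      rw [← hx]; abel
  have h₂M : (fun k => ((y₂ k : ℤ) : ℝ)) ∈
      {w : Fin s → ℝ | ∃ y : Fin s → ℤ, (∀ k, 0 ≤ y k) ∧
        (∃ x : Fin n → ℤ, A.mulVec x + B.mulVec y = b) ∧ w = fun k => (y k : ℝ)} := by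
    refine ⟨y₂, fun k => ?_, ⟨x + w, ?_⟩, rfl⟩
    · have h := (hz₂.2) k
      have h0 := (hz₁.1) k
      simp only [hy₂, Pi.add_apply, Pi.sub_apply, Pi.zero_apply] at *
      linarith
    · rw [hy₂, Matrix.mulVec_add, Matrix.mulVec_sub, Matrix.mulVec_add, hw]
      rw [← hx]; abel
  have hseg : (fun k => (y k : ℝ)) ∈
      openSegment ℝ (fun k => ((y₁ k : ℤ) : ℝ)) (fun k => ((y₂ k : ℤ) : ℝ)) := by
    refine ⟨1/2, 1/2, by norm_num, by norm_num, by norm_num, ?_⟩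
    funext k
    simp only [hy₁, hy₂, Pi.add_apply, Pi.sub_apply, Pi.smul_apply, smul_eq_mul]
    push_cast
    ring
  have he₁ := hy.2 (subset_convexHull ℝ _ h₁M) (subset_convexHull ℝ _ h₂M) hseg
  apply hne
  funext k
  have := congrFun he₁ k
  simp only [hy₁, Pi.add_apply, Pi.sub_apply] at this
  have h : ((y k - z₁ k + z₂ k : ℤ) : ℝ) = (y k : ℝ) := by exact_mod_cast this
  have h' : y k - z₁ k + z₂ k = y k := by exact_mod_cast h
  omega
end

section
/- Let A be an (n+1)×n integer matrix and b ∈ ℤ^{n+1} such that P = P(A,b) = {x ∈ ℝ^n : Ax ≤ b} is an n-dimensional simplex. Let J ⊆ {1,…,n+1} with |J| = n, let Â = A_{J,*} and b̂ = b_J, suppose Δ = |det(Â)| > 0, and let v = Â^{-1} b̂ be the corresponding vertex of P. Define S = {x ∈ ℝ^n : Âx ≤ b̂ and ∑_{j∈J} (b̂_j − (Âx)_j) ≤ Δ − 1}. If the width w(P) is at least Δ − 1, then S ⊆ P. -/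
open Matrix

/-- Let `P = P(A,b)` be an `n`-dimensional simplex given by an
`(n+1) × n` integer matrix `A` and `b ∈ ℤ^{n+1}`. Choose `n` of the rows via an injective
map `g : Fin n → Fin (n+1)`, set `Â = A_{J,*}`, `b̂ = b_J`, suppose `Δ = |det Â| > 0`, and
let `v = Â⁻¹ b̂` be the corresponding vertex of `P`. Put
`S = {x : Âx ≤ b̂, ∑_{j∈J} (b̂_j − (Âx)_j) ≤ Δ − 1}`. If `w(P) ≥ Δ − 1`, then `S ⊆ P`. -/
theorem simplex_corner_set_subset {n : ℕ} (A : Matrix (Fin (n + 1)) (Fin n) ℤ)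
    (b : Fin (n + 1) → ℤ)
    (hbdd : Bornology.IsBounded (poly A b))
    (hfull : (interior (poly A b)).Nonempty)
    (hvert : (Set.extremePoints ℝ (poly A b)).ncard = n + 1)
    (g : Fin n → Fin (n + 1)) (hg : Function.Injective g)
    (hdet : (A.submatrix g id).det ≠ 0)
    (v : Fin n → ℝ)
    (hv : ((A.submatrix g id).map (Int.cast : ℤ → ℝ)).mulVec v = fun j => (b (g j) : ℝ))
    (hvP : v ∈ Set.extremePoints ℝ (poly A b))
    (hwidth : width (poly A b) ≥ (((A.submatrix g id).det.natAbs : ℝ)) - 1) :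
    {x : Fin n → ℝ |
        (∀ j, ((A.submatrix g id).map (Int.cast : ℤ → ℝ)).mulVec x j ≤ (b (g j) : ℝ)) ∧
        ∑ j, ((b (g j) : ℝ) - ((A.submatrix g id).map (Int.cast : ℤ → ℝ)).mulVec x j) ≤
          ((A.submatrix g id).det.natAbs : ℝ) - 1} ⊆ poly A b := by
  have hvP' : v ∈ poly A b := extremePoints_subset hvP
  intro x hx
  obtain ⟨hx1, hx2⟩ := hx
  rcases Nat.eq_zero_or_pos n with hn | hn
  · subst hn
    have hxv : x = v := by funext i; exact i.elim0
    rwa [hxv]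
  have hne : Nonempty (Fin n) := ⟨⟨0, hn⟩⟩
  set Ahat := A.submatrix g id with hAhat
  set R : Matrix (Fin n) (Fin n) ℝ := Ahat.map (Int.cast : ℤ → ℝ) with hRdef
  set Δ : ℝ := ((Ahat.det.natAbs : ℝ)) with hΔ
  have hRdet : R.det ≠ 0 := by
    have h1 : R.det = ((Ahat.det : ℤ) : ℝ) := by
      rw [hRdef]
      exact (RingHom.map_det (Int.castRingHom ℝ) Ahat).symm
    rw [h1]; exact_mod_cast hdet
  have hRu : IsUnit R.det := isUnit_iff_ne_zero.mpr hRdet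
  -- the leftover row index
  have hcard : (Finset.univ.image g)ᶜ.card = 1 := by
    rw [Finset.card_compl, Finset.card_image_of_injective _ hg, Finset.card_univ]
    simp
  obtain ⟨i₀, hi₀⟩ := Finset.card_eq_one.mp hcard
  have hcase : ∀ i : Fin (n+1), i = i₀ ∨ ∃ k, g k = i := by
    intro i
    by_cases h : i ∈ Finset.univ.image g
    · right; obtain ⟨k, _, hk⟩ := Finset.mem_image.mp h; exact ⟨k, hk⟩
    · left
      have hmem : i ∈ (Finset.univ.image g)ᶜ := Finset.mem_compl.mpr h
      rw [hi₀] at hmem; exact Finset.mem_singleton.mp hmem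
  set a0 : Fin n → ℝ := fun k => (A i₀ k : ℝ) with ha0
  set μ : Fin n → ℝ := a0 ᵥ* R⁻¹ with hμ
  have hμR : μ ᵥ* R = a0 := by
    rw [hμ, Matrix.vecMul_vecMul, Matrix.nonsing_inv_mul R hRu, Matrix.vecMul_one]
  have key : ∀ y : Fin n → ℝ, a0 ⬝ᵥ y = μ ⬝ᵥ (R *ᵥ y) := by
    intro y; rw [Matrix.dotProduct_mulVec, hμR]
  have hrow : ∀ (y : Fin n → ℝ) (k : Fin n),
      ((A.map (Int.cast : ℤ → ℝ)) *ᵥ y) (g k) = (R *ᵥ y) k := by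
    intro y k
    simp [hRdef, hAhat, Matrix.mulVec, Matrix.map_apply, Matrix.submatrix_apply,
      dotProduct]
  have hrow0 : ∀ y : Fin n → ℝ, ((A.map (Int.cast : ℤ → ℝ)) *ᵥ y) i₀ = a0 ⬝ᵥ y := by
    intro y; rfl
  have hmem : ∀ y : Fin n → ℝ, (∀ k, (R *ᵥ y) k ≤ (b (g k) : ℝ)) →
      a0 ⬝ᵥ y ≤ (b i₀ : ℝ) → y ∈ poly A b := by
    intro y h1 h2
    simp only [poly, Set.mem_setOf_eq]
    intro i
    rcases hcase i with rfl | ⟨k, rfl⟩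
    · rw [hrow0]; exact h2
    · rw [hrow y k]; exact h1 k
  have hvmem : ∀ i, ((A.map (Int.cast : ℤ → ℝ)) *ᵥ v) i ≤ (b i : ℝ) := hvP'
  have hva : a0 ⬝ᵥ v ≤ (b i₀ : ℝ) := by rw [← hrow0 v]; exact hvmem i₀
  -- all μ are negative (else P unbounded)
  have hμneg : ∀ j, μ j < 0 := by
    intro j
    by_contra hcon
    push_neg at hcon
    set d : Fin n → ℝ := -(R⁻¹ *ᵥ Pi.single j 1) with hd
    have hRd : R *ᵥ d = -(Pi.single j 1) := by
      rw [hd, Matrix.mulVec_neg, Matrix.mulVec_mulVec, Matrix.mul_nonsing_inv R hRu,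
        Matrix.one_mulVec]
    have hdne : d ≠ 0 := by
      intro h0
      have h1 : R *ᵥ (0 : Fin n → ℝ) = -(Pi.single j 1) := h0 ▸ hRd
      rw [Matrix.mulVec_zero] at h1
      have h2 := congrFun h1 j
      simp at h2
    obtain ⟨C, hC⟩ := isBounded_iff_forall_norm_le.mp hbdd
    have hdpos : 0 < ‖d‖ := norm_pos_iff.mpr hdne
    have hCv : ‖v‖ ≤ C := hC v hvP'
    have hvn : (0:ℝ) ≤ ‖v‖ := norm_nonneg v
    set t : ℝ := (C + ‖v‖ + 1) / ‖d‖ with ht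
    have htpos : 0 ≤ t := div_nonneg (by linarith) hdpos.le
    have ha0d : a0 ⬝ᵥ d = -μ j := by
      rw [key d, hRd]
      simp [dotProduct_neg, dotProduct_single]
    have hmemt : v + t • d ∈ poly A b := by
      apply hmem
      · intro k
        have he : (R *ᵥ (v + t • d)) k = (b (g k) : ℝ) + t * (-(Pi.single j 1) : Fin n → ℝ) k := by
          rw [Matrix.mulVec_add, Matrix.mulVec_smul, hRd]
          have := congrFun hv k
          simp only [Pi.add_apply, Pi.smul_apply, smul_eq_mul]
          rw [this]
        rw [he]
        have hnp : t * (-(Pi.single j 1) : Fin n → ℝ) k ≤ 0 := by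
          rcases eq_or_ne k j with rfl | hkj
          · simpa using htpos
          · simp [Pi.single_eq_of_ne hkj]
        linarith
      · have he : a0 ⬝ᵥ (v + t • d) = a0 ⬝ᵥ v + t * (a0 ⬝ᵥ d) := by
          rw [dotProduct_add, dotProduct_smul, smul_eq_mul]
        rw [he, ha0d]
        have : t * (-μ j) ≤ 0 := mul_nonpos_of_nonneg_of_nonpos htpos (by linarith)
        linarith
    have h1 : ‖v + t • d‖ ≤ C := hC _ hmemt
    have h2 : ‖t • d‖ ≤ ‖v + t • d‖ + ‖v‖ := by
      have := norm_sub_le (v + t • d) v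
      simpa using this
    have h3 : ‖t • d‖ = t * ‖d‖ := by
      rw [norm_smul, Real.norm_eq_abs, abs_of_nonneg htpos]
    have h4 : t * ‖d‖ = C + ‖v‖ + 1 := by
      rw [ht, div_mul_cancel₀ _ hdpos.ne']
    rw [h3, h4] at h2
    linarith
  -- pick the maximizer of -μ
  obtain ⟨js, -, hjs⟩ := Finset.exists_max_image Finset.univ (fun j => -μ j)
    Finset.univ_nonempty
  have hMax : ∀ j, -μ j ≤ -μ js := fun j => hjs j (Finset.mem_univ j)
  have hMpos : 0 < -μ js := by linarith [hμneg js]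
  set t0 : ℝ := ((b i₀ : ℝ) - a0 ⬝ᵥ v) / (-μ js) with ht0
  have ht0nn : 0 ≤ t0 := div_nonneg (by linarith) hMpos.le
  have ht0M : t0 * (-μ js) = (b i₀ : ℝ) - a0 ⬝ᵥ v := div_mul_cancel₀ _ hMpos.ne'
  -- sum identity
  have hsum : ∀ y : Fin n → ℝ,
      a0 ⬝ᵥ y = a0 ⬝ᵥ v + ∑ k, (μ k) * ((R *ᵥ y) k - (b (g k) : ℝ)) := by
    intro y
    rw [key y, key v, hv]
    simp only [dotProduct]
    rw [← Finset.sum_add_distrib]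
    exact Finset.sum_congr rfl fun k _ => by ring
  -- lower bound on the js-th row over P
  have hlow : ∀ y ∈ poly A b, (b (g js) : ℝ) - t0 ≤ (R *ᵥ y) js := by
    intro y hy
    have hy' : ∀ i, ((A.map (Int.cast : ℤ → ℝ)) *ᵥ y) i ≤ (b i : ℝ) := hy
    have h2 : a0 ⬝ᵥ y ≤ (b i₀ : ℝ) := by rw [← hrow0 y]; exact hy' i₀
    have h3 : ∑ k, (-μ k) * ((b (g k) : ℝ) - (R *ᵥ y) k) ≤ t0 * (-μ js) := by
      have hs := hsum y
      have : ∑ k, (-μ k) * ((b (g k) : ℝ) - (R *ᵥ y) k)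
          = ∑ k, (μ k) * ((R *ᵥ y) k - (b (g k) : ℝ)) :=
        Finset.sum_congr rfl fun k _ => by ring
      rw [this]
      linarith [ht0M]
    have hterm : ∀ k, 0 ≤ (-μ k) * ((b (g k) : ℝ) - (R *ᵥ y) k) := by
      intro k
      apply mul_nonneg (by linarith [hμneg k])
      have := hy' (g k); rw [hrow y k] at this; linarith
    have h4 : (-μ js) * ((b (g js) : ℝ) - (R *ᵥ y) js) ≤ t0 * (-μ js) :=
      le_trans (Finset.single_le_sum (fun k _ => hterm k) (Finset.mem_univ js)) h3
    nlinarith [hMpos]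
  -- upper bound on the js-th row over P
  have hupp : ∀ y ∈ poly A b, (R *ᵥ y) js ≤ (b (g js) : ℝ) := by
    intro y hy
    have hy' : ∀ i, ((A.map (Int.cast : ℤ → ℝ)) *ᵥ y) i ≤ (b i : ℝ) := hy
    have := hy' (g js); rwa [hrow y js] at this
  -- the width direction
  set f : (Fin n → ℝ) → ℝ := fun y => ∑ k, (((fun k => A (g js) k) k : ℤ) : ℝ) * y k with hf
  have hfR : ∀ y, f y = (R *ᵥ y) js := by
    intro y
    simp [hf, hRdef, hAhat, Matrix.mulVec, dotProduct, Matrix.map_apply,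
      Matrix.submatrix_apply]
  have himgne : (f '' poly A b).Nonempty := ⟨f v, ⟨v, hvP', rfl⟩⟩
  have hsup : sSup (f '' poly A b) ≤ (b (g js) : ℝ) := by
    apply csSup_le himgne
    rintro z ⟨y, hy, rfl⟩
    rw [hfR]; exact hupp y hy
  have hinf : (b (g js) : ℝ) - t0 ≤ sInf (f '' poly A b) := by
    apply le_csInf himgne
    rintro z ⟨y, hy, rfl⟩
    rw [hfR]; exact hlow y hy
  have hcne : (fun k => A (g js) k) ≠ (0 : Fin n → ℤ) := by
    intro h0
    apply hdet
    apply Matrix.det_eq_zero_of_row_eq_zero js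
    intro k
    have := congrFun h0 k
    simpa [hAhat, Matrix.submatrix_apply] using this
  have hWbdd : BddBelow {w : ℝ | ∃ c : Fin n → ℤ, c ≠ 0 ∧
      w = sSup ((fun x : Fin n → ℝ => ∑ i, (c i : ℝ) * x i) '' poly A b)
        - sInf ((fun x : Fin n → ℝ => ∑ i, (c i : ℝ) * x i) '' poly A b)} := by
    refine ⟨0, ?_⟩
    rintro w ⟨c, hc, rfl⟩
    obtain ⟨C, hC⟩ := isBounded_iff_forall_norm_le.mp hbdd
    set fc := fun y : Fin n → ℝ => ∑ i, (c i : ℝ) * y i with hfc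
    have hbound : ∀ y ∈ poly A b, |fc y| ≤ ∑ i, |(c i : ℝ)| * C := by
      intro y hy
      calc |fc y| ≤ ∑ i, |(c i : ℝ) * y i| := Finset.abs_sum_le_sum_abs _ _
        _ ≤ ∑ i, |(c i : ℝ)| * C := by
          apply Finset.sum_le_sum; intro i _
          rw [abs_mul]
          apply mul_le_mul_of_nonneg_left _ (abs_nonneg _)
          calc |y i| = ‖y i‖ := (Real.norm_eq_abs _).symm
            _ ≤ ‖y‖ := norm_le_pi_norm y i
            _ ≤ C := hC y hy
    have hA : BddAbove (fc '' poly A b) := by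
      refine ⟨∑ i, |(c i : ℝ)| * C, ?_⟩
      rintro z ⟨y, hy, rfl⟩
      exact le_trans (le_abs_self _) (hbound y hy)
    have hB : BddBelow (fc '' poly A b) := by
      refine ⟨-(∑ i, |(c i : ℝ)| * C), ?_⟩
      rintro z ⟨y, hy, rfl⟩
      exact neg_le_of_abs_le (hbound y hy)
    have h1 : sInf (fc '' poly A b) ≤ fc v := csInf_le hB ⟨v, hvP', rfl⟩
    have h2 : fc v ≤ sSup (fc '' poly A b) := le_csSup hA ⟨v, hvP', rfl⟩
    linarith
  have hwid : width (poly A b) ≤ sSup (f '' poly A b) - sInf (f '' poly A b) := by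
    apply csInf_le hWbdd
    exact ⟨fun k => A (g js) k, hcne, rfl⟩
  have hΔt : Δ - 1 ≤ t0 := by
    have h5 : Δ - 1 ≤ width (poly A b) := hwidth
    linarith
  -- conclude
  apply hmem x hx1
  have hx1' : ∀ k, 0 ≤ (b (g k) : ℝ) - (R *ᵥ x) k := fun k => by linarith [hx1 k]
  have hsx : ∑ k, (-μ k) * ((b (g k) : ℝ) - (R *ᵥ x) k) ≤ (-μ js) * (Δ - 1) := by
    calc ∑ k, (-μ k) * ((b (g k) : ℝ) - (R *ᵥ x) k)
        ≤ ∑ k, (-μ js) * ((b (g k) : ℝ) - (R *ᵥ x) k) :=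
          Finset.sum_le_sum fun k _ => mul_le_mul_of_nonneg_right (hMax k) (hx1' k)
      _ = (-μ js) * ∑ k, ((b (g k) : ℝ) - (R *ᵥ x) k) := by rw [Finset.mul_sum]
      _ ≤ (-μ js) * (Δ - 1) := mul_le_mul_of_nonneg_left hx2 hMpos.le
  have heq : ∑ k, (μ k) * ((R *ᵥ x) k - (b (g k) : ℝ))
      = ∑ k, (-μ k) * ((b (g k) : ℝ) - (R *ᵥ x) k) :=
    Finset.sum_congr rfl fun k _ => by ring
  have h6 : (-μ js) * (Δ - 1) ≤ (-μ js) * t0 := mul_le_mul_of_nonneg_left hΔt hMpos.le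
  have h7 : (-μ js) * t0 = (b i₀ : ℝ) - a0 ⬝ᵥ v := by rw [mul_comm]; exact ht0M
  rw [hsum x, heq]
  linarith
end
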